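/- Let B × F₁ × ⋯ × F_l be a (possibly degenerate) multiply warped product of singular semi-Riemannian manifolds (B,g_B) and (F_j,g_{F_j}) with warping functions f_j ∈ C^∞(B), 1 ≤ j ≤ l. Let X,Y,Z be vector fields on B and U_j,V_j,W_j vector fields on F_j (identified with their lifts), and let K denote the Koszul form of the multiply warped product metric, K_B that of (B,g_B), and K_{F_j} that of (F_j,g_{F_j}). Then: (1) K(X,Y,Z) = K_B(X,Y,Z); (2) K(X,Y,W_j) = K(X,W_j,Y) = K(W_j,X,Y) = 0; (3) K(X,V_j,W_j) = K(V_j,X,W_j) = −K(V_j,W_j,X) = f_j·g_{F_j}(V_j,W_j)·X(f_j); (4) K(X,V_i,W_j) = K(V_i,X,W_j) = K(V_i,W_j,X) = 0 for i ≠ j; (5) K(U_j,V_j,W_j) = f_j²·K_{F_j}(U_j,V_j,W_j); (6) K(U_i,V_j,W_k) = 0 whenever i,j,k are pairwise distinct; (7) K(U_i,V_i,W_j) = K(U_i,W_j,V_i) = K(W_j,U_i,V_i) = 0 for i ≠ j. -/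
import Mathlib


noncomputable section

/-!
An algebraic (Koszul-style) model of singular semi-Riemannian manifolds, following
Stoica's "singular semi-Riemannian geometry".

* `M` is the set of points of the smooth manifold;
* `T p` is the tangent space at `p : M`;
* `IsFn h` says that `h : M → ℝ` is a smooth function, i.e. `h ∈ C^∞(M)`;
* `IsVF X` says that the section `X : ∀ p, T p` of the tangent bundle is a smooth
  vector field, i.e. `X ∈ Γ(TM)`;
* `D X h` is the derivative `X(h)` of the smooth function `h` along `X`;
* `bracket X Y` is the Lie bracket `[X,Y]` of vector fields;
* `g` is the metric: a smooth symmetric bilinear form on the tangent bundle, which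
  may be degenerate and of variable signature.
-/
structure SSRM (M : Type*) (T : M → Type*)
    [∀ p, AddCommGroup (T p)] [∀ p, Module ℝ (T p)] where
  /-- the smooth real functions `C^∞(M)` -/
  IsFn : (M → ℝ) → Prop
  /-- the smooth vector fields `Γ(TM)` -/
  IsVF : (∀ p, T p) → Prop
  /-- the directional derivative `X(h)` of a function along a vector field -/
  D : (∀ p, T p) → (M → ℝ) → M → ℝ
  /-- the Lie bracket of vector fields -/
  bracket : (∀ p, T p) → (∀ p, T p) → ∀ p, T p
  /-- the (possibly degenerate) metric, pointwise a bilinear form -/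
  g : ∀ p, T p →ₗ[ℝ] T p →ₗ[ℝ] ℝ
  g_symm : ∀ p u v, g p u v = g p v u
  fn_const : ∀ c : ℝ, IsFn fun _ => c
  fn_add : ∀ a b, IsFn a → IsFn b → IsFn (a + b)
  fn_mul : ∀ a b, IsFn a → IsFn b → IsFn (a * b)
  vf_add : ∀ X Y, IsVF X → IsVF Y → IsVF (X + Y)
  vf_smul : ∀ a X, IsFn a → IsVF X → IsVF fun p => a p • X p
  vf_smulR : ∀ (r : ℝ) X, IsVF X → IsVF (r • X)
  g_smooth : ∀ X Y, IsVF X → IsVF Y → IsFn fun p => g p (X p) (Y p)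
  D_smooth : ∀ X a, IsVF X → IsFn a → IsFn (D X a)
  D_add_fn : ∀ X a b, IsVF X → IsFn a → IsFn b → D X (a + b) = D X a + D X b
  D_mul_fn : ∀ X a b, IsVF X → IsFn a → IsFn b → D X (a * b) = D X a * b + a * D X b
  D_const : ∀ X (c : ℝ), IsVF X → D X (fun _ => c) = 0
  D_add_vf : ∀ X Y a, IsVF X → IsVF Y → IsFn a → D (X + Y) a = D X a + D Y a
  D_smul_vf : ∀ b X a, IsFn b → IsVF X → IsFn a →
    D (fun p => b p • X p) a = b * D X a
  bracket_smooth : ∀ X Y, IsVF X → IsVF Y → IsVF (bracket X Y)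
  bracket_antisymm : ∀ X Y, IsVF X → IsVF Y → bracket X Y = -bracket Y X
  bracket_add_left : ∀ X Y Z, IsVF X → IsVF Y → IsVF Z →
    bracket (X + Y) Z = bracket X Z + bracket Y Z
  bracket_leibniz : ∀ X a Y, IsVF X → IsFn a → IsVF Y →
    bracket X (fun p => a p • Y p)
      = (fun p => a p • bracket X Y p) + (fun p => D X a p • Y p)
  D_bracket : ∀ X Y a, IsVF X → IsVF Y → IsFn a →
    D (bracket X Y) a = D X (D Y a) - D Y (D X a)

namespace SSRM

variable {M : Type*} {T : M → Type*} [∀ p, AddCommGroup (T p)] [∀ p, Module ℝ (T p)]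

/-- `⟨X,Y⟩ = g(X,Y)`, as a function on `M`. -/
def gf (S : SSRM M T) (X Y : ∀ p, T p) : M → ℝ := fun p => S.g p (X p) (Y p)

/-- The Koszul form
`K(X,Y,Z) = (1/2){X⟨Y,Z⟩ + Y⟨Z,X⟩ − Z⟨X,Y⟩ − ⟨X,[Y,Z]⟩ + ⟨Y,[Z,X]⟩ + ⟨Z,[X,Y]⟩}`. -/
def K (S : SSRM M T) (X Y Z : ∀ p, T p) : M → ℝ :=
  ((1 : ℝ) / 2) • (S.D X (S.gf Y Z) + S.D Y (S.gf Z X) - S.D Z (S.gf X Y)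
    - S.gf X (S.bracket Y Z) + S.gf Y (S.bracket Z X) + S.gf Z (S.bracket X Y))

/-- The semi-symmetric metric Koszul form (w.r.t. the vector field `P`):
`K̄(X,Y,Z) = K(X,Y,Z) + g(Y,P)g(X,Z) − g(X,Y)g(P,Z)`. -/
def Kbar (S : SSRM M T) (P X Y Z : ∀ p, T p) : M → ℝ :=
  S.K X Y Z + S.gf Y P * S.gf X Z - S.gf X Y * S.gf P Z

/-- The semi-symmetric non-metric Koszul form (w.r.t. the vector field `P`):
`K̂(X,Y,Z) = K(X,Y,Z) + g(Y,P)g(X,Z)`. -/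
def Khat (S : SSRM M T) (P X Y Z : ∀ p, T p) : M → ℝ :=
  S.K X Y Z + S.gf Y P * S.gf X Z

/-- The Lie derivative of the metric:
`(L_Y g)(Z,X) = Y(g(Z,X)) − g([Y,Z],X) − g(Z,[Y,X])`. -/
def lieD (S : SSRM M T) (Y Z X : ∀ p, T p) : M → ℝ :=
  S.D Y (S.gf Z X) - S.gf (S.bracket Y Z) X - S.gf Z (S.bracket Y X)

/-- `W ∈ Γ₀(TM)`: a smooth vector field with `g(W,Y) = 0` for every vector field `Y`. -/
def Gamma0 (S : SSRM M T) (W : ∀ p, T p) : Prop :=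
  S.IsVF W ∧ ∀ Y, S.IsVF Y → S.gf W Y = 0

/-- A 1-form `ω` (given by its action `ω(Z)` on vector fields) belongs to `A^•(M)`:
at every point `p` the covector `ω_p` lies in the image of the flat map
`v ↦ g_p(v,·) : T_pM → T_p*M`. -/
def MemAsup (S : SSRM M T) (ω : (∀ p, T p) → M → ℝ) : Prop :=
  ∀ p : M, ∃ v : T p, ∀ Z, S.IsVF Z → ω Z p = S.g p v (Z p)

/-- `(M,g)` is radical-stationary: `K(X,Y,·) ∈ A^•(M)` for all vector fields `X,Y`. -/
def RadicalStationary (S : SSRM M T) : Prop :=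
  ∀ X Y, S.IsVF X → S.IsVF Y → S.MemAsup fun Z => S.K X Y Z

/-- `Y^♭ = g(Y,·)`, as a 1-form. -/
def flat (S : SSRM M T) (Y : ∀ p, T p) : (∀ p, T p) → M → ℝ := fun Z => S.gf Y Z

/-- The semi-symmetric metric lower covariant derivative: `∇̄♭_X Y = K̄(X,Y,·)`. -/
def nablaFlatBar (S : SSRM M T) (P X Y : ∀ p, T p) : (∀ p, T p) → M → ℝ :=
  fun Z => S.Kbar P X Y Z

/-- The semi-symmetric non-metric lower covariant derivative: `∇̂♭_X Y = K̂(X,Y,·)`. -/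
def nablaFlatHat (S : SSRM M T) (P X Y : ∀ p, T p) : (∀ p, T p) → M → ℝ :=
  fun Z => S.Khat P X Y Z

/-- Pointwise application of a bundle map `J : TM → TM` to a vector field. -/
def Jv (J : ∀ p, T p →ₗ[ℝ] T p) (X : ∀ p, T p) : ∀ p, T p := fun p => J p (X p)

/-- `J` is an almost product structure on `(M,g)`: a smooth bundle map `J : TM → TM`
with `J² = id` and `g(JX,JY) = g(X,Y)`. -/
structure IsAlmostProduct (S : SSRM M T) (J : ∀ p, T p →ₗ[ℝ] T p) : Prop where
  invol : ∀ p v, J p (J p v) = v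
  compat : ∀ p u v, S.g p (J p u) (J p v) = S.g p u v
  smooth : ∀ X, S.IsVF X → S.IsVF (Jv J X)

/-- The almost product Koszul form `K̃(X,Y,Z) = (1/2)[K(X,Y,Z) + K(X,JY,JZ)]`. -/
def Ktilde (S : SSRM M T) (J : ∀ p, T p →ₗ[ℝ] T p) (X Y Z : ∀ p, T p) : M → ℝ :=
  ((1 : ℝ) / 2) • (S.K X Y Z + S.K X (Jv J Y) (Jv J Z))

/-- The almost product lower covariant derivative: `∇̃♭_X Y = K̃(X,Y,·)`. -/
def nablaFlatTilde (S : SSRM M T) (J : ∀ p, T p →ₗ[ℝ] T p) (X Y : ∀ p, T p) :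
    (∀ p, T p) → M → ℝ :=
  fun Z => S.Ktilde J X Y Z

end SSRM

namespace SSRM

variable {MB : Type*} {TB : MB → Type*}
  [∀ p, AddCommGroup (TB p)] [∀ p, Module ℝ (TB p)]
  {l : ℕ} {MF : Fin l → Type*} {TF : ∀ j, MF j → Type*}
  [∀ j q, AddCommGroup (TF j q)] [∀ j q, Module ℝ (TF j q)]

/-- The lift to the product `B × F₁ × ⋯ × F_l` of a vector field on the base `B`. -/
def mliftB (X : ∀ p, TB p) :
    ∀ pq : MB × (∀ j, MF j), TB pq.1 × (∀ j, TF j (pq.2 j)) :=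
  fun pq => (X pq.1, 0)

/-- The lift to the product `B × F₁ × ⋯ × F_l` of a vector field on the fiber `F_j`. -/
def mliftF (j : Fin l) (U : ∀ q, TF j q) :
    ∀ pq : MB × (∀ j, MF j), TB pq.1 × (∀ j, TF j (pq.2 j)) :=
  fun pq => (0, Pi.single j (U (pq.2 j)))

/-- `W` is the multiply warped product `B × F₁ × ⋯ × F_l` of the singular
semi-Riemannian manifolds `B` and `F_j` with warping functions `f_j ∈ C^∞(B)`:
a singular semi-Riemannian structure on the product manifold whose metric is
`⟨x,y⟩ = g_B(dπ_B x, dπ_B y) + Σ_j f_j(π_B p)² g_{F_j}(dπ_{F_j} x, dπ_{F_j} y)`,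
and whose smooth structure, directional derivative and Lie bracket behave
canonically on the lifts of functions and of vector fields from the factors. -/
structure IsMultiplyWarpedProduct (B : SSRM MB TB) (F : ∀ j, SSRM (MF j) (TF j))
    (f : Fin l → MB → ℝ)
    (W : SSRM (MB × ∀ j, MF j) fun pq => TB pq.1 × (∀ j, TF j (pq.2 j))) : Prop where
  smooth_f : ∀ j, B.IsFn (f j)
  metric : ∀ (pq : MB × ∀ j, MF j) (u v : TB pq.1 × (∀ j, TF j (pq.2 j))),
    W.g pq u v
      = B.g pq.1 u.1 v.1 + ∑ j, f j pq.1 ^ 2 * (F j).g (pq.2 j) (u.2 j) (v.2 j)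
  fn_liftB : ∀ a, B.IsFn a → W.IsFn fun pq => a pq.1
  fn_liftF : ∀ (j) (b), (F j).IsFn b → W.IsFn fun pq => b (pq.2 j)
  vf_liftB : ∀ X, B.IsVF X → W.IsVF (mliftB X)
  vf_liftF : ∀ (j) (U), (F j).IsVF U → W.IsVF (mliftF j U)
  D_liftB_fnB : ∀ X a, B.IsVF X → B.IsFn a →
    W.D (mliftB X) (fun pq => a pq.1) = fun pq => B.D X a pq.1
  D_liftB_fnF : ∀ X j b, B.IsVF X → (F j).IsFn b →
    W.D (mliftB X) (fun pq => b (pq.2 j)) = 0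
  D_liftF_fnB : ∀ j U a, (F j).IsVF U → B.IsFn a →
    W.D (mliftF j U) (fun pq => a pq.1) = 0
  D_liftF_fnF_same : ∀ j U b, (F j).IsVF U → (F j).IsFn b →
    W.D (mliftF j U) (fun pq => b (pq.2 j)) = fun pq => (F j).D U b (pq.2 j)
  D_liftF_fnF_ne : ∀ i j U b, i ≠ j → (F i).IsVF U → (F j).IsFn b →
    W.D (mliftF i U) (fun pq => b (pq.2 j)) = 0
  bracket_BB : ∀ X Y, B.IsVF X → B.IsVF Y →
    W.bracket (mliftB X) (mliftB Y) = mliftB (B.bracket X Y)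
  bracket_BF : ∀ X j U, B.IsVF X → (F j).IsVF U →
    W.bracket (mliftB X) (mliftF j U) = 0
  bracket_FF_same : ∀ j U V, (F j).IsVF U → (F j).IsVF V →
    W.bracket (mliftF j U) (mliftF j V) = mliftF j ((F j).bracket U V)
  bracket_FF_ne : ∀ i j U V, i ≠ j → (F i).IsVF U → (F j).IsVF V →
    W.bracket (mliftF i U) (mliftF j V) = 0

end SSRM
namespace SSRM

section Helpers

variable {M : Type*} {T : M → Type*} [∀ p, AddCommGroup (T p)] [∀ p, Module ℝ (T p)]

lemma D_zero (S : SSRM M T) (X : ∀ p, T p) (hX : S.IsVF X) : S.D X 0 = 0 :=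
  S.D_const X 0 hX

lemma gf_symm (S : SSRM M T) (X Y : ∀ p, T p) : S.gf X Y = S.gf Y X :=
  funext fun p => S.g_symm p _ _

lemma gf_zero_left (S : SSRM M T) (X : ∀ p, T p) : S.gf 0 X = 0 := by
  funext p; simp [SSRM.gf]

lemma gf_zero_right (S : SSRM M T) (X : ∀ p, T p) : S.gf X 0 = 0 := by
  funext p; simp [SSRM.gf]

end Helpers

section WarpedHelpers

variable {MB : Type*} {TB : MB → Type*}
  [∀ p, AddCommGroup (TB p)] [∀ p, Module ℝ (TB p)]
  {l : ℕ} {MF : Fin l → Type*} {TF : ∀ j, MF j → Type*}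
  [∀ j q, AddCommGroup (TF j q)] [∀ j q, Module ℝ (TF j q)]
  {B : SSRM MB TB} {F : ∀ j, SSRM (MF j) (TF j)} {f : Fin l → MB → ℝ}
  {Wp : SSRM (MB × ∀ j, MF j) fun pq => TB pq.1 × (∀ j, TF j (pq.2 j))}

lemma gf_BB (hWp : IsMultiplyWarpedProduct B F f Wp) (X Y : ∀ p, TB p) :
    Wp.gf (mliftB X) (mliftB Y) = fun pq => B.gf X Y pq.1 := by
  funext pq
  simp [SSRM.gf, hWp.metric, mliftB]

lemma gf_BF (hWp : IsMultiplyWarpedProduct B F f Wp) (X : ∀ p, TB p)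
    (j : Fin l) (U : ∀ q, TF j q) :
    Wp.gf (mliftB X) (mliftF j U) = 0 := by
  funext pq
  simp [SSRM.gf, hWp.metric, mliftB, mliftF]

lemma gf_FB (hWp : IsMultiplyWarpedProduct B F f Wp) (X : ∀ p, TB p)
    (j : Fin l) (U : ∀ q, TF j q) :
    Wp.gf (mliftF j U) (mliftB X) = 0 := by
  funext pq
  simp [SSRM.gf, hWp.metric, mliftB, mliftF]

lemma gf_FF_same (hWp : IsMultiplyWarpedProduct B F f Wp)
    (j : Fin l) (U V : ∀ q, TF j q) :
    Wp.gf (mliftF j U) (mliftF j V)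
      = fun pq => f j pq.1 ^ 2 * (F j).gf U V (pq.2 j) := by
  funext pq
  simp only [SSRM.gf, hWp.metric, mliftF, map_zero, LinearMap.zero_apply, zero_add]
  rw [Finset.sum_eq_single j]
  · rw [Pi.single_eq_same, Pi.single_eq_same]
  · intro k _ hk
    rw [Pi.single_eq_of_ne hk, map_zero, LinearMap.zero_apply, mul_zero]
  · intro h
    exact absurd (Finset.mem_univ j) h

lemma gf_FF_ne (hWp : IsMultiplyWarpedProduct B F f Wp)
    {i j : Fin l} (hij : i ≠ j) (U : ∀ q, TF i q) (V : ∀ q, TF j q) :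
    Wp.gf (mliftF i U) (mliftF j V) = 0 := by
  funext pq
  simp only [SSRM.gf, hWp.metric, mliftF, Pi.zero_apply, map_zero,
    LinearMap.zero_apply, zero_add]
  apply Finset.sum_eq_zero
  intro k _
  rcases eq_or_ne k i with rfl | hk
  · rw [Pi.single_eq_of_ne hij, map_zero, mul_zero]
  · rw [Pi.single_eq_of_ne hk, map_zero, LinearMap.zero_apply, mul_zero]

lemma bracket_FB (hWp : IsMultiplyWarpedProduct B F f Wp) (X : ∀ p, TB p)
    (j : Fin l) (U : ∀ q, TF j q) (hX : B.IsVF X) (hU : (F j).IsVF U) :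
    Wp.bracket (mliftF j U) (mliftB X) = 0 := by
  rw [Wp.bracket_antisymm _ _ (hWp.vf_liftF j U hU) (hWp.vf_liftB X hX),
    hWp.bracket_BF X j U hX hU, neg_zero]

lemma fsq_split (j : Fin l) (b : MF j → ℝ) :
    (fun pq : MB × ∀ j, MF j => f j pq.1 ^ 2 * b (pq.2 j))
      = (fun pq : MB × ∀ j, MF j => (f j * f j) pq.1)
        * fun pq : MB × ∀ j, MF j => b (pq.2 j) := by
  funext pq
  simp [sq]

lemma D_B_gfFF (hWp : IsMultiplyWarpedProduct B F f Wp) (X : ∀ p, TB p)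
    (hX : B.IsVF X) (j : Fin l) (V W : ∀ q, TF j q)
    (hV : (F j).IsVF V) (hW : (F j).IsVF W) :
    Wp.D (mliftB X) (Wp.gf (mliftF j V) (mliftF j W))
      = fun pq => 2 * (f j pq.1 * (F j).gf V W (pq.2 j) * B.D X (f j) pq.1) := by
  have hgFsm : (F j).IsFn ((F j).gf V W) := (F j).g_smooth V W hV hW
  have hff : B.IsFn (f j * f j) := B.fn_mul _ _ (hWp.smooth_f j) (hWp.smooth_f j)
  rw [gf_FF_same hWp, fsq_split,
    Wp.D_mul_fn _ _ _ (hWp.vf_liftB X hX) (hWp.fn_liftB _ hff) (hWp.fn_liftF j _ hgFsm),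
    hWp.D_liftB_fnB X (f j * f j) hX hff,
    hWp.D_liftB_fnF X j _ hX hgFsm,
    B.D_mul_fn X (f j) (f j) hX (hWp.smooth_f j) (hWp.smooth_f j)]
  funext pq
  simp
  ring

lemma D_F_gfFF_same (hWp : IsMultiplyWarpedProduct B F f Wp)
    (j : Fin l) (U V W : ∀ q, TF j q)
    (hU : (F j).IsVF U) (hV : (F j).IsVF V) (hW : (F j).IsVF W) :
    Wp.D (mliftF j U) (Wp.gf (mliftF j V) (mliftF j W))
      = fun pq => f j pq.1 ^ 2 * (F j).D U ((F j).gf V W) (pq.2 j) := by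
  have hgFsm : (F j).IsFn ((F j).gf V W) := (F j).g_smooth V W hV hW
  have hff : B.IsFn (f j * f j) := B.fn_mul _ _ (hWp.smooth_f j) (hWp.smooth_f j)
  rw [gf_FF_same hWp, fsq_split,
    Wp.D_mul_fn _ _ _ (hWp.vf_liftF j U hU) (hWp.fn_liftB _ hff) (hWp.fn_liftF j _ hgFsm),
    hWp.D_liftF_fnB j U (f j * f j) hU hff,
    hWp.D_liftF_fnF_same j U _ hU hgFsm]
  funext pq
  simp [sq]

lemma D_F_gfFF_ne (hWp : IsMultiplyWarpedProduct B F f Wp)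
    {i j : Fin l} (hij : i ≠ j) (U : ∀ q, TF i q) (V W : ∀ q, TF j q)
    (hU : (F i).IsVF U) (hV : (F j).IsVF V) (hW : (F j).IsVF W) :
    Wp.D (mliftF i U) (Wp.gf (mliftF j V) (mliftF j W)) = 0 := by
  have hgFsm : (F j).IsFn ((F j).gf V W) := (F j).g_smooth V W hV hW
  have hff : B.IsFn (f j * f j) := B.fn_mul _ _ (hWp.smooth_f j) (hWp.smooth_f j)
  rw [gf_FF_same hWp, fsq_split,
    Wp.D_mul_fn _ _ _ (hWp.vf_liftF i U hU) (hWp.fn_liftB _ hff) (hWp.fn_liftF j _ hgFsm),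
    hWp.D_liftF_fnB i U (f j * f j) hU hff,
    hWp.D_liftF_fnF_ne i j U _ hij hU hgFsm]
  funext pq
  simp

lemma D_F_fsqb_ne (hWp : IsMultiplyWarpedProduct B F f Wp)
    {i j : Fin l} (hij : i ≠ j) (U : ∀ q, TF i q) (hU : (F i).IsVF U)
    (b : MF j → ℝ) (hb : (F j).IsFn b) :
    Wp.D (mliftF i U) (fun pq => f j pq.1 ^ 2 * b (pq.2 j)) = 0 := by
  have hff : B.IsFn (f j * f j) := B.fn_mul _ _ (hWp.smooth_f j) (hWp.smooth_f j)
  rw [fsq_split,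
    Wp.D_mul_fn _ _ _ (hWp.vf_liftF i U hU) (hWp.fn_liftB _ hff) (hWp.fn_liftF j _ hb),
    hWp.D_liftF_fnB i U (f j * f j) hU hff,
    hWp.D_liftF_fnF_ne i j U _ hij hU hb]
  funext pq
  simp

lemma D_F_gfBB (hWp : IsMultiplyWarpedProduct B F f Wp)
    (j : Fin l) (U : ∀ q, TF j q) (hU : (F j).IsVF U)
    (X Y : ∀ p, TB p) (hX : B.IsVF X) (hY : B.IsVF Y) :
    Wp.D (mliftF j U) (Wp.gf (mliftB X) (mliftB Y)) = 0 := by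
  rw [gf_BB hWp, hWp.D_liftF_fnB j U (B.gf X Y) hU (B.g_smooth X Y hX hY)]

lemma D_B_gfBB (hWp : IsMultiplyWarpedProduct B F f Wp)
    (X Y Z : ∀ p, TB p) (hX : B.IsVF X) (hY : B.IsVF Y) (hZ : B.IsVF Z) :
    Wp.D (mliftB X) (Wp.gf (mliftB Y) (mliftB Z))
      = fun pq => B.D X (B.gf Y Z) pq.1 := by
  rw [gf_BB hWp, hWp.D_liftB_fnB X (B.gf Y Z) hX (B.g_smooth Y Z hY hZ)]

end WarpedHelpers

end SSRM

/-- Proposition 5.2: the Koszul form of a (possibly degenerate)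
multiply warped product `B × F₁ × ⋯ × F_l`, on lifts of vector fields
`X,Y,Z ∈ Γ(TB)` and `U_j,V_j,W_j ∈ Γ(TF_j)`, in terms of the data on the factors. -/
theorem koszul_multiplyWarpedProduct
    {MB : Type*} {TB : MB → Type*}
    [∀ p, AddCommGroup (TB p)] [∀ p, Module ℝ (TB p)]
    {l : ℕ} {MF : Fin l → Type*} {TF : ∀ j, MF j → Type*}
    [∀ j q, AddCommGroup (TF j q)] [∀ j q, Module ℝ (TF j q)]
    (B : SSRM MB TB) (F : ∀ j, SSRM (MF j) (TF j)) (f : Fin l → MB → ℝ)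
    (Wp : SSRM (MB × ∀ j, MF j) fun pq => TB pq.1 × (∀ j, TF j (pq.2 j)))
    (hWp : SSRM.IsMultiplyWarpedProduct B F f Wp)
    (X Y Z : ∀ p, TB p) (hX : B.IsVF X) (hY : B.IsVF Y) (hZ : B.IsVF Z)
    (U V W : ∀ j, ∀ q, TF j q)
    (hU : ∀ j, (F j).IsVF (U j)) (hV : ∀ j, (F j).IsVF (V j))
    (hW : ∀ j, (F j).IsVF (W j)) :
    -- (1) `K(X,Y,Z) = K_B(X,Y,Z)`
    Wp.K (SSRM.mliftB X) (SSRM.mliftB Y) (SSRM.mliftB Z)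
      = (fun pq => B.K X Y Z pq.1) ∧
    -- (2) `K(X,Y,W_j) = K(X,W_j,Y) = K(W_j,X,Y) = 0`
    (∀ j, Wp.K (SSRM.mliftB X) (SSRM.mliftB Y) (SSRM.mliftF j (W j)) = 0 ∧
      Wp.K (SSRM.mliftB X) (SSRM.mliftF j (W j)) (SSRM.mliftB Y) = 0 ∧
      Wp.K (SSRM.mliftF j (W j)) (SSRM.mliftB X) (SSRM.mliftB Y) = 0) ∧
    -- (3) `K(X,V_j,W_j) = K(V_j,X,W_j) = −K(V_j,W_j,X) = f_j·g_{F_j}(V_j,W_j)·X(f_j)`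
    (∀ j, Wp.K (SSRM.mliftB X) (SSRM.mliftF j (V j)) (SSRM.mliftF j (W j))
        = Wp.K (SSRM.mliftF j (V j)) (SSRM.mliftB X) (SSRM.mliftF j (W j)) ∧
      Wp.K (SSRM.mliftF j (V j)) (SSRM.mliftB X) (SSRM.mliftF j (W j))
        = -Wp.K (SSRM.mliftF j (V j)) (SSRM.mliftF j (W j)) (SSRM.mliftB X) ∧
      Wp.K (SSRM.mliftB X) (SSRM.mliftF j (V j)) (SSRM.mliftF j (W j))
        = (fun pq => f j pq.1 * (F j).gf (V j) (W j) (pq.2 j) * B.D X (f j) pq.1)) ∧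
    -- (4) `K(X,V_i,W_j) = K(V_i,X,W_j) = K(V_i,W_j,X) = 0` for `i ≠ j`
    (∀ i j, i ≠ j →
      Wp.K (SSRM.mliftB X) (SSRM.mliftF i (V i)) (SSRM.mliftF j (W j)) = 0 ∧
      Wp.K (SSRM.mliftF i (V i)) (SSRM.mliftB X) (SSRM.mliftF j (W j)) = 0 ∧
      Wp.K (SSRM.mliftF i (V i)) (SSRM.mliftF j (W j)) (SSRM.mliftB X) = 0) ∧
    -- (5) `K(U_j,V_j,W_j) = f_j²·K_{F_j}(U_j,V_j,W_j)`
    (∀ j, Wp.K (SSRM.mliftF j (U j)) (SSRM.mliftF j (V j)) (SSRM.mliftF j (W j))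
      = (fun pq => f j pq.1 ^ 2 * (F j).K (U j) (V j) (W j) (pq.2 j))) ∧
    -- (6) `K(U_i,V_j,W_k) = 0` for pairwise distinct `i,j,k`
    (∀ i j k, i ≠ j → j ≠ k → i ≠ k →
      Wp.K (SSRM.mliftF i (U i)) (SSRM.mliftF j (V j)) (SSRM.mliftF k (W k)) = 0) ∧
    -- (7) `K(U_i,V_i,W_j) = K(U_i,W_j,V_i) = K(W_j,U_i,V_i) = 0` for `i ≠ j`
    (∀ i j, i ≠ j →
      Wp.K (SSRM.mliftF i (U i)) (SSRM.mliftF i (V i)) (SSRM.mliftF j (W j)) = 0 ∧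
      Wp.K (SSRM.mliftF i (U i)) (SSRM.mliftF j (W j)) (SSRM.mliftF i (V i)) = 0 ∧
      Wp.K (SSRM.mliftF j (W j)) (SSRM.mliftF i (U i)) (SSRM.mliftF i (V i)) = 0) := by
  obtain ⟨hUl, hVl, hWl⟩ : (∀ j, Wp.IsVF (SSRM.mliftF j (U j)))
      ∧ (∀ j, Wp.IsVF (SSRM.mliftF j (V j))) ∧ (∀ j, Wp.IsVF (SSRM.mliftF j (W j))) :=
    ⟨fun j => hWp.vf_liftF j (U j) (hU j), fun j => hWp.vf_liftF j (V j) (hV j),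
      fun j => hWp.vf_liftF j (W j) (hW j)⟩
  refine ⟨?_, ?_, ?_, ?_, ?_, ?_, ?_⟩
  · -- (1)
    unfold SSRM.K
    rw [SSRM.D_B_gfBB hWp X Y Z hX hY hZ, SSRM.D_B_gfBB hWp Y Z X hY hZ hX,
      SSRM.D_B_gfBB hWp Z X Y hZ hX hY,
      hWp.bracket_BB Y Z hY hZ, hWp.bracket_BB Z X hZ hX, hWp.bracket_BB X Y hX hY,
      SSRM.gf_BB hWp, SSRM.gf_BB hWp, SSRM.gf_BB hWp]
    funext pq
    simp [SSRM.K]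
  · -- (2)
    intro j
    refine ⟨?_, ?_, ?_⟩ <;>
    simp [SSRM.K, SSRM.gf_BF hWp, SSRM.gf_FB hWp, SSRM.D_F_gfBB hWp,
      hWp.bracket_BF, hWp.bracket_BB, SSRM.bracket_FB hWp,
      SSRM.gf_zero_right, SSRM.gf_zero_left, SSRM.D_zero,
      hWp.vf_liftB, hWp.vf_liftF, hX, hY, hW]
  · -- (3)
    intro j
    have h1 : Wp.K (SSRM.mliftB X) (SSRM.mliftF j (V j)) (SSRM.mliftF j (W j))
        = fun pq => f j pq.1 * (F j).gf (V j) (W j) (pq.2 j) * B.D X (f j) pq.1 := by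
      unfold SSRM.K
      rw [SSRM.D_B_gfFF hWp X hX j (V j) (W j) (hV j) (hW j),
        SSRM.gf_FB hWp X j (W j), SSRM.gf_BF hWp X j (V j),
        hWp.bracket_FF_same j (V j) (W j) (hV j) (hW j),
        SSRM.bracket_FB hWp X j (W j) hX (hW j),
        hWp.bracket_BF X j (V j) hX (hV j),
        SSRM.gf_BF hWp X j ((F j).bracket (V j) (W j)),
        Wp.D_zero _ (hVl j), Wp.D_zero _ (hWl j),
        Wp.gf_zero_right, Wp.gf_zero_right]
      funext pq
      simp
      try ring
    have h2 : Wp.K (SSRM.mliftF j (V j)) (SSRM.mliftB X) (SSRM.mliftF j (W j))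
        = fun pq => f j pq.1 * (F j).gf (V j) (W j) (pq.2 j) * B.D X (f j) pq.1 := by
      unfold SSRM.K
      rw [SSRM.D_B_gfFF hWp X hX j (W j) (V j) (hW j) (hV j),
        SSRM.gf_BF hWp X j (W j), SSRM.gf_FB hWp X j (V j),
        hWp.bracket_BF X j (W j) hX (hW j),
        hWp.bracket_FF_same j (W j) (V j) (hW j) (hV j),
        SSRM.bracket_FB hWp X j (V j) hX (hV j),
        SSRM.gf_BF hWp X j ((F j).bracket (W j) (V j)),
        Wp.D_zero _ (hVl j), Wp.D_zero _ (hWl j),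
        Wp.gf_zero_right, Wp.gf_zero_right,
        SSRM.gf_symm (F j) (W j) (V j)]
      funext pq
      simp
      try ring
    have h3 : Wp.K (SSRM.mliftF j (V j)) (SSRM.mliftF j (W j)) (SSRM.mliftB X)
        = fun pq => -(f j pq.1 * (F j).gf (V j) (W j) (pq.2 j) * B.D X (f j) pq.1) := by
      unfold SSRM.K
      rw [SSRM.D_B_gfFF hWp X hX j (V j) (W j) (hV j) (hW j),
        SSRM.gf_FB hWp X j (W j), SSRM.gf_BF hWp X j (V j),
        SSRM.bracket_FB hWp X j (W j) hX (hW j),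
        hWp.bracket_BF X j (V j) hX (hV j),
        hWp.bracket_FF_same j (V j) (W j) (hV j) (hW j),
        SSRM.gf_BF hWp X j ((F j).bracket (V j) (W j)),
        Wp.D_zero _ (hVl j), Wp.D_zero _ (hWl j),
        Wp.gf_zero_right, Wp.gf_zero_right]
      funext pq
      simp
      try ring
    refine ⟨h1.trans h2.symm, ?_, h1⟩
    rw [h2, h3]
    funext pq
    simp
  · -- (4)
    intro i j hij
    refine ⟨?_, ?_, ?_⟩ <;>
    simp [SSRM.K, SSRM.gf_BF hWp, SSRM.gf_FB hWp, SSRM.gf_FF_ne hWp,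
      hWp.bracket_BF, SSRM.bracket_FB hWp, hWp.bracket_FF_ne,
      SSRM.gf_zero_right, SSRM.gf_zero_left, SSRM.D_zero,
      hWp.vf_liftB, hWp.vf_liftF, hX, hV, hW, hij, Ne.symm hij]
  · -- (5)
    intro j
    unfold SSRM.K
    rw [SSRM.D_F_gfFF_same hWp j (U j) (V j) (W j) (hU j) (hV j) (hW j),
      SSRM.D_F_gfFF_same hWp j (V j) (W j) (U j) (hV j) (hW j) (hU j),
      SSRM.D_F_gfFF_same hWp j (W j) (U j) (V j) (hW j) (hU j) (hV j),
      hWp.bracket_FF_same j (V j) (W j) (hV j) (hW j),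
      hWp.bracket_FF_same j (W j) (U j) (hW j) (hU j),
      hWp.bracket_FF_same j (U j) (V j) (hU j) (hV j),
      SSRM.gf_FF_same hWp, SSRM.gf_FF_same hWp, SSRM.gf_FF_same hWp]
    funext pq
    simp
    try ring
  · -- (6)
    intro i j k hij hjk hik
    simp [SSRM.K, SSRM.gf_FF_ne hWp, hWp.bracket_FF_ne,
      SSRM.gf_zero_right, SSRM.gf_zero_left, SSRM.D_zero,
      hWp.vf_liftF, hU, hV, hW, hij, hjk, hik, Ne.symm hij, Ne.symm hjk, Ne.symm hik]
  · -- (7)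
    intro i j hij
    have hg : ∀ (k : Fin l) (A A' : ∀ q, TF k q), (F k).IsVF A → (F k).IsVF A' →
        (F k).IsFn ((F k).gf A A') := fun k A A' hA hA' => (F k).g_smooth A A' hA hA'
    refine ⟨?_, ?_, ?_⟩ <;>
    simp [SSRM.K, SSRM.gf_FF_ne hWp, SSRM.gf_FF_same hWp, SSRM.D_F_fsqb_ne hWp, hg,
      hWp.bracket_FF_ne, hWp.bracket_FF_same,
      SSRM.gf_zero_right, SSRM.gf_zero_left, SSRM.D_zero,
      hWp.vf_liftF, hU, hV, hW, hij, Ne.symm hij]
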